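/- arXiv:1607.04818 — 4 statements merged into one kernel-verified Lean document; each statement's English description precedes it below -/
import Mathlib

section
/- Let X ⊆ R^n be a nonempty closed convex set, f : R^n → R be C^1 with L_f-Lipschitz gradient on X, and g : R^n → R be convex. Fix y ∈ X and define x̂(y) = argmin_{x ∈ X} { f̃(x; y) + g(x) }, where f̃(·; y) is a C^1, c-strongly convex function on X satisfying ∇f̃(y; y) = ∇f(y). Then (x̂(y) - y)^T ∇f(y) + g(x̂(y)) - g(y) ≤ -c ||x̂(y) - y||_2^2. -/
open RealInnerProductSpace

/-- Best-response optimality (Proposition 2(a)). -/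
theorem best_response_optimality {n : ℕ} (X : Set (EuclideanSpace ℝ (Fin n)))
    (hXne : X.Nonempty) (hXcl : IsClosed X) (hXcv : Convex ℝ X)
    (f ftil g : EuclideanSpace ℝ (Fin n) → ℝ) (L_f c : ℝ) (hc : 0 < c)
    (hf : ContDiff ℝ 1 f)
    (hlip : LipschitzOnWith (Real.toNNReal L_f) (gradient f) X)
    (hg : ConvexOn ℝ Set.univ g)
    (hftil : ContDiff ℝ 1 ftil)
    (hsc : ∀ a ∈ X, ∀ b ∈ X,
      ftil a + ⟪gradient ftil a, b - a⟫ + c * ‖b - a‖^2 ≤ ftil b)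
    (y : EuclideanSpace ℝ (Fin n)) (hy : y ∈ X)
    (hgrad : gradient ftil y = gradient f y)
    (xhat : EuclideanSpace ℝ (Fin n)) (hxhatX : xhat ∈ X)
    (hmin : ∀ x ∈ X, ftil xhat + g xhat ≤ ftil x + g x) :
    ⟪xhat - y, gradient f y⟫ + g xhat - g y ≤ -c * ‖xhat - y‖^2 := by
  have h1 := hsc y hy xhat hxhatX
  have h2 := hmin y hy
  rw [hgrad, real_inner_comm] at h1
  linarith
end

section
/- Let X ⊆ R^n be a nonempty closed convex set and g : R^n → R convex. Let f̃ : X × X → R be such that f̃(·; y) is C^1 and c-strongly convex on X for every y ∈ X, and ∇f̃(z; ·) is L_B-Lipschitz continuous on X uniformly in z (where ∇ denotes the gradient in the first argument). Define x̂(y) = argmin_{x ∈ X} { f̃(x; y) + g(x) }. Then for all y, z ∈ X, ||x̂(y) - x̂(z)||_2 ≤ (L_B / c) ||y - z||_2. -/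
open RealInnerProductSpace

/-- Lipschitz continuity of the best-response map (Proposition 2(b)). -/
theorem best_response_lipschitz {n : ℕ} (X : Set (EuclideanSpace ℝ (Fin n)))
    (hXne : X.Nonempty) (hXcl : IsClosed X) (hXcv : Convex ℝ X)
    (ftil : EuclideanSpace ℝ (Fin n) → EuclideanSpace ℝ (Fin n) → ℝ)
    (g : EuclideanSpace ℝ (Fin n) → ℝ) (c L_B : ℝ) (hc : 0 < c) (hLB : 0 < L_B)
    (hg : ConvexOn ℝ Set.univ g)
    (hC1 : ∀ y ∈ X, ContDiff ℝ 1 (fun x => ftil x y))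
    (hsc : ∀ y ∈ X, ∀ a ∈ X, ∀ b ∈ X,
      ftil a y + ⟪gradient (fun x => ftil x y) a, b - a⟫ + c * ‖b - a‖^2 ≤ ftil b y)
    (hlipB : ∀ z ∈ X,
      LipschitzOnWith (Real.toNNReal L_B) (fun y => gradient (fun x => ftil x y) z) X)
    (xhat : EuclideanSpace ℝ (Fin n) → EuclideanSpace ℝ (Fin n))
    (hbr : ∀ y ∈ X, xhat y ∈ X ∧ ∀ x ∈ X, ftil (xhat y) y + g (xhat y) ≤ ftil x y + g x) :
    ∀ y ∈ X, ∀ z ∈ X, ‖xhat y - xhat z‖ ≤ (L_B / c) * ‖y - z‖ := by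
  intro y hy z hz
  set a := xhat y with ha
  set b := xhat z with hb
  obtain ⟨haX, hamin⟩ := hbr y hy
  obtain ⟨hbX, hbmin⟩ := hbr z hz
  -- Step 1: quadratic growth at the minimizer
  have qg : ∀ w ∈ X, ∀ p ∈ X,
      ftil (xhat w) w + g (xhat w) + (c/2) * ‖p - xhat w‖^2 ≤ ftil p w + g p := by
    intro w hw p hp
    obtain ⟨hxw, hmin⟩ := hbr w hw
    set q := xhat w with hqdef
    set m : EuclideanSpace ℝ (Fin n) := (1/2 : ℝ) • q + (1/2 : ℝ) • p with hm
    have hmX : m ∈ X := hXcv hxw hp (by norm_num) (by norm_num) (by norm_num)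
    have h1 := hsc w hw m hmX q hxw
    have h2 := hsc w hw m hmX p hp
    have hsum0 : (q - m) + (p - m) = 0 := by rw [hm]; module
    have hinner : ⟪gradient (fun x => ftil x w) m, q - m⟫
        + ⟪gradient (fun x => ftil x w) m, p - m⟫ = 0 := by
      rw [← inner_add_right, hsum0, inner_zero_right]
    have hq1 : ‖q - m‖ = (1/2) * ‖q - p‖ := by
      have h : q - m = (1/2 : ℝ) • (q - p) := by rw [hm]; module
      rw [h, norm_smul]; simp
    have hp1 : ‖p - m‖ = (1/2) * ‖q - p‖ := by
      have h : p - m = (1/2 : ℝ) • (p - q) := by rw [hm]; module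
      rw [h, norm_smul, norm_sub_rev]; simp
    have hgm : g m ≤ (1/2) * g q + (1/2) * g p := by
      have := hg.2 (Set.mem_univ q) (Set.mem_univ p)
        (by norm_num : (0:ℝ) ≤ 1/2) (by norm_num : (0:ℝ) ≤ 1/2) (by norm_num)
      rw [hm]
      simpa [smul_eq_mul] using this
    have hmin' := hmin m hmX
    have hpm : ‖p - q‖ = ‖q - p‖ := norm_sub_rev _ _
    rw [hq1] at h1
    rw [hp1] at h2
    rw [hpm]
    nlinarith [h1, h2, hinner, hmin', hgm]
  have h1 := qg y hy b hbX
  have h2 := qg z hz a haX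
  -- Step 2: Lipschitz bound on x ↦ ftil x y - ftil x z over X
  have hdy : Differentiable ℝ (fun x => ftil x y) := (hC1 y hy).differentiable one_ne_zero
  have hdz : Differentiable ℝ (fun x => ftil x z) := (hC1 z hz).differentiable one_ne_zero
  have hlip : ‖(ftil b y - ftil b z) - (ftil a y - ftil a z)‖
      ≤ (L_B * ‖y - z‖) * ‖b - a‖ := by
    have hder : ∀ x ∈ X, HasFDerivWithinAt (fun u => ftil u y - ftil u z)
        (fderiv ℝ (fun u => ftil u y) x - fderiv ℝ (fun u => ftil u z) x) X x := by
      intro x hx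
      exact ((hdy x).hasFDerivAt.sub (hdz x).hasFDerivAt).hasFDerivWithinAt
    have hbound : ∀ x ∈ X,
        ‖fderiv ℝ (fun u => ftil u y) x - fderiv ℝ (fun u => ftil u z) x‖
          ≤ L_B * ‖y - z‖ := by
      intro x hx
      have hdist := (hlipB x hx).dist_le_mul y hy z hz
      rw [Real.coe_toNNReal _ hLB.le] at hdist
      have heq : ‖fderiv ℝ (fun u => ftil u y) x - fderiv ℝ (fun u => ftil u z) x‖
          = ‖gradient (fun u => ftil u y) x - gradient (fun u => ftil u z) x‖ := by
        rw [show gradient (fun u => ftil u y) x - gradient (fun u => ftil u z) x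
            = (InnerProductSpace.toDual ℝ (EuclideanSpace ℝ (Fin n))).symm
              (fderiv ℝ (fun u => ftil u y) x - fderiv ℝ (fun u => ftil u z) x) by
          rw [map_sub]; rfl]
        rw [LinearIsometryEquiv.norm_map]
      rw [heq, ← dist_eq_norm]
      calc dist (gradient (fun u => ftil u y) x) (gradient (fun u => ftil u z) x)
          ≤ L_B * dist y z := hdist
        _ = L_B * ‖y - z‖ := by rw [dist_eq_norm]
    have := hXcv.norm_image_sub_le_of_norm_hasFDerivWithin_le hder hbound haX hbX
    simpa using this
  have habs : (ftil b y - ftil b z) - (ftil a y - ftil a z) ≤ (L_B * ‖y - z‖) * ‖b - a‖ :=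
    le_trans (le_abs_self _) (by simpa [Real.norm_eq_abs] using hlip)
  -- Step 3: combine
  have hab : ‖a - b‖ = ‖b - a‖ := norm_sub_rev _ _
  have hkey : c * ‖b - a‖^2 ≤ (L_B * ‖y - z‖) * ‖b - a‖ := by
    rw [hab] at h2
    nlinarith [h1, h2, habs]
  have hba : ‖a - b‖ = ‖b - a‖ := hab
  rcases eq_or_lt_of_le (norm_nonneg (b - a)) with h0 | h0
  · rw [hba, ← h0]
    positivity
  · rw [hba, div_mul_eq_mul_div, le_div_iff₀ hc]
    nlinarith [hkey, h0]
end

section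
/- Let X ⊆ R^n be a nonempty closed convex set, f : R^n → R be C^1, and g : R^n → R convex. Let f̃(·; y) be C^1 and strongly convex on X with ∇f̃(y; y) = ∇f(y) for all y ∈ X, and define x̂(y) = argmin_{x ∈ X} { f̃(x; y) + g(x) }. Then a point x̄ ∈ X is a fixed point of x̂ (i.e., x̂(x̄) = x̄) if and only if x̄ is a stationary point of min_{x ∈ X} f(x) + g(x), i.e., ∇f(x̄)^T (y - x̄) + g(y) - g(x̄) ≥ 0 for all y ∈ X. -/
open RealInnerProductSpace

/-- Fixed-point characterization of the best-response map (Proposition 2(c)):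
`x̄ ∈ X` is a fixed point of the best-response map iff it is a stationary point of
`min_{x ∈ X} f(x) + g(x)`. -/
theorem best_response_fixed_point_iff_stationary {n : ℕ}
    (X : Set (EuclideanSpace ℝ (Fin n)))
    (hXne : X.Nonempty) (hXcl : IsClosed X) (hXcv : Convex ℝ X)
    (f : EuclideanSpace ℝ (Fin n) → ℝ) (hf : ContDiff ℝ 1 f)
    (g : EuclideanSpace ℝ (Fin n) → ℝ) (hg : ConvexOn ℝ Set.univ g)
    (ftil : EuclideanSpace ℝ (Fin n) → EuclideanSpace ℝ (Fin n) → ℝ) (c : ℝ) (hc : 0 < c)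
    (hC1 : ∀ y ∈ X, ContDiff ℝ 1 (fun x => ftil x y))
    (hsc : ∀ y ∈ X, ∀ a ∈ X, ∀ b ∈ X,
      ftil a y + ⟪gradient (fun x => ftil x y) a, b - a⟫ + c * ‖b - a‖^2 ≤ ftil b y)
    (hgrad : ∀ y ∈ X, gradient (fun x => ftil x y) y = gradient f y)
    (xhat : EuclideanSpace ℝ (Fin n) → EuclideanSpace ℝ (Fin n))
    (hbr : ∀ y ∈ X, xhat y ∈ X ∧ ∀ x ∈ X, ftil (xhat y) y + g (xhat y) ≤ ftil x y + g x)
    (xb : EuclideanSpace ℝ (Fin n)) (hxb : xb ∈ X) :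
    xhat xb = xb ↔ ∀ y ∈ X, 0 ≤ ⟪gradient f xb, y - xb⟫ + g y - g xb := by
  obtain ⟨hmemX, hmin⟩ := hbr xb hxb
  constructor
  · intro hfix y hy
    rw [hfix] at hmin
    set φ : EuclideanSpace ℝ (Fin n) → ℝ := fun x => ftil x xb with hφ
    have hdiff : DifferentiableAt ℝ φ xb :=
      ((hC1 xb hxb).differentiable one_ne_zero).differentiableAt
    have hgradAt : HasGradientAt φ (gradient φ xb) xb := hdiff.hasGradientAt
    set v := y - xb with hv
    -- derivative of t ↦ φ (xb + t • v) at 0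
    have hline : HasDerivAt (fun t : ℝ => φ (xb + t • v)) ⟪gradient φ xb, v⟫ 0 := by
      have h1 : HasDerivAt (fun t : ℝ => xb + t • v) v 0 := by
        simpa using ((hasDerivAt_id (0:ℝ)).smul_const v).const_add xb
      have h2 : HasFDerivAt φ ((InnerProductSpace.toDual ℝ _) (gradient φ xb))
          ((fun t : ℝ => xb + t • v) 0) := by simpa using hgradAt.hasFDerivAt
      have h3 := h2.comp_hasDerivAt (0:ℝ) h1
      exact h3
    have htend : Filter.Tendsto (slope (fun t : ℝ => φ (xb + t • v)) 0)
        (nhdsWithin 0 (Set.Ioi 0)) (nhds ⟪gradient φ xb, v⟫) := by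
      have := hasDerivAt_iff_tendsto_slope.mp hline
      exact this.mono_left (nhdsWithin_mono _ (fun t ht => ne_of_gt ht))
    have hev : ∀ᶠ t in nhdsWithin (0:ℝ) (Set.Ioi 0),
        -(g y - g xb) ≤ slope (fun t : ℝ => φ (xb + t • v)) 0 t := by
      filter_upwards [Ioo_mem_nhdsGT_of_mem (by norm_num : (0:ℝ) ∈ Set.Ico 0 1)] with t ht
      obtain ⟨ht0, ht1⟩ := ht
      have hxt : xb + t • v = (1 - t) • xb + t • y := by
        rw [hv]; module
      have hmemt : xb + t • v ∈ X := by
        rw [hxt]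
        exact hXcv hxb hy (by linarith) (le_of_lt ht0) (by ring)
      have hgcvx : g (xb + t • v) ≤ (1 - t) * g xb + t * g y := by
        have := hg.2 (Set.mem_univ xb) (Set.mem_univ y)
          (by linarith : (0:ℝ) ≤ 1 - t) (le_of_lt ht0) (by ring)
        simpa [hxt, smul_eq_mul] using this
      have hopt : ftil xb xb + g xb ≤ ftil (xb + t • v) xb + g (xb + t • v) :=
        hmin _ hmemt
      have hkey : -(g y - g xb) * t ≤ φ (xb + t • v) - φ xb := by
        simp only [hφ]
        nlinarith
      rw [slope_def_field]
      simp only [zero_smul, add_zero, sub_zero]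
      rw [le_div_iff₀ ht0]
      linarith [hkey]
    have hlim : -(g y - g xb) ≤ ⟪gradient φ xb, v⟫ := ge_of_tendsto htend hev
    have heq : gradient φ xb = gradient f xb := hgrad xb hxb
    rw [heq] at hlim
    linarith
  · intro hstat
    by_contra hne
    set z := xhat xb with hz
    have hz1 := hsc xb hxb xb hxb z hmemX
    rw [hgrad xb hxb] at hz1
    have hz2 : ftil z xb + g z ≤ ftil xb xb + g xb := hmin xb hxb
    have hz3 := hstat z hmemX
    have hnorm : 0 < ‖z - xb‖ := by
      rw [norm_pos_iff, sub_ne_zero]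
      exact fun h => hne h
    linarith [mul_pos hc (pow_pos hnorm 2)]
end

section
/- Let X ⊆ R^n be nonempty closed convex, f C^1 with L_f-Lipschitz gradient on X, g convex and finite on X. Fix points x, x̃ ∈ X and an index-block update: let x̂ ∈ X satisfy the best-response optimality (x̂ - x̃)^T ∇f(x̃) + g(x̂) - g(x̃) ≤ -c ||x̂ - x̃||_2^2 (with c > 0), and define x^+ = x + γ(x̂ - x) with γ ∈ (0,1], where x̃ agrees with x in the updated block (so x̂ - x = x̂ - x̃ in that block and x^+ differs from x only in that block). Then F(x^+) ≤ F(x) - γ(c - γ L_f)||x̂ - x||_2^2 + (L_f / 2)||x - x̃||_2^2, where F = f + g. -/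
open RealInnerProductSpace intervalIntegral

lemma descent_lemma {F : Type*} [NormedAddCommGroup F] [InnerProductSpace ℝ F] [CompleteSpace F]
    {f : F → ℝ} (hf : ContDiff ℝ 1 f) {s : Set F} (hs : Convex ℝ s)
    {L : ℝ} (hL : 0 ≤ L) (hlip : LipschitzOnWith (Real.toNNReal L) (gradient f) s)
    {x y : F} (hx : x ∈ s) (hy : y ∈ s) :
    f y ≤ f x + ⟪gradient f x, y - x⟫ + L / 2 * ‖y - x‖ ^ 2 := by
  set d := y - x with hd
  have hdiff : ∀ z, HasGradientAt f (gradient f z) z :=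
    fun z => (hf.differentiable one_ne_zero z).hasGradientAt
  have hderiv : ∀ t : ℝ, HasDerivAt (fun t : ℝ => f (x + t • d))
      ⟪gradient f (x + t • d), d⟫ t := by
    intro t
    have hc : HasDerivAt (fun t : ℝ => x + t • d) d t := by
      simpa using ((hasDerivAt_id t).smul_const d).const_add x
    have h2 := (hdiff (x + t • d)).hasFDerivAt.comp_hasDerivAt t hc
    simpa [Function.comp_def, InnerProductSpace.toDual_apply_apply] using h2
  have hgc : Continuous (gradient f) := by
    have h1 : Continuous (fderiv ℝ f) := hf.continuous_fderiv one_ne_zero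
    exact (InnerProductSpace.toDual ℝ F).symm.continuous.comp h1
  have hint : Continuous fun t : ℝ => ⟪gradient f (x + t • d), d⟫ := by
    exact (hgc.comp (by continuity)).inner continuous_const
  have hftc : f (x + (1:ℝ) • d) - f (x + (0:ℝ) • d)
      = ∫ t in (0:ℝ)..1, ⟪gradient f (x + t • d), d⟫ :=
    (intervalIntegral.integral_eq_sub_of_hasDerivAt (fun t _ => hderiv t)
      (hint.intervalIntegrable _ _)).symm
  have hfy : f y - f x = ∫ t in (0:ℝ)..1, ⟪gradient f (x + t • d), d⟫ := by
    simpa [hd] using hftc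
  have hmem : ∀ t ∈ Set.Icc (0:ℝ) 1, x + t • d ∈ s := by
    intro t ht
    have h1 : (0:ℝ) ≤ 1 - t := by linarith [ht.2]
    have h2 := hs hx hy h1 ht.1 (by ring)
    have h3 : x + t • d = (1 - t) • x + t • y := by rw [hd]; module
    rw [h3]; exact h2
  have hbound : ∀ t ∈ Set.Icc (0:ℝ) 1,
      ⟪gradient f (x + t • d), d⟫ ≤ ⟪gradient f x, d⟫ + (L * ‖d‖^2) * t := by
    intro t ht
    have h1 : ⟪gradient f (x + t • d) - gradient f x, d⟫
        ≤ ‖gradient f (x + t • d) - gradient f x‖ * ‖d‖ := real_inner_le_norm _ _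
    have h2 : ‖gradient f (x + t • d) - gradient f x‖ ≤ L * (t * ‖d‖) := by
      have h3 := hlip.dist_le_mul _ (hmem t ht) _ hx
      rw [dist_eq_norm, dist_eq_norm] at h3
      have h4 : ‖x + t • d - x‖ = t * ‖d‖ := by
        rw [add_sub_cancel_left, norm_smul, Real.norm_eq_abs, abs_of_nonneg ht.1]
      rw [h4, Real.coe_toNNReal L hL] at h3
      exact h3
    have h3 : ⟪gradient f (x + t • d), d⟫
        = ⟪gradient f x, d⟫ + ⟪gradient f (x + t • d) - gradient f x, d⟫ := by
      rw [inner_sub_left]; ring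
    nlinarith [norm_nonneg d]
  have hmono := intervalIntegral.integral_mono_on (μ := MeasureTheory.volume) (by norm_num : (0:ℝ) ≤ 1)
    (hint.intervalIntegrable 0 1)
    ((continuous_const.add (continuous_const.mul continuous_id')).intervalIntegrable 0 1)
    hbound
  have hval : (∫ t in (0:ℝ)..1, (⟪gradient f x, d⟫ + (L * ‖d‖^2) * t))
      = ⟪gradient f x, d⟫ + L / 2 * ‖d‖^2 := by
    rw [intervalIntegral.integral_add (f := fun _ => ⟪gradient f x, d⟫) (g := fun t => L * ‖d‖^2 * t) intervalIntegrable_const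
      ((continuous_const.mul continuous_id').intervalIntegrable 0 1),
      intervalIntegral.integral_const_mul]
    simp [integral_id]
    ring
  simp only [Pi.add_apply, Pi.mul_apply] at hmono; rw [hval] at hmono
  linarith [hfy, hmono]

set_option maxHeartbeats 1000000

/-- One-step descent inequality with delayed information (inequality (14)):
`F(x⁺) ≤ F(x) - γ(c - γ L_f)‖x̂ - x‖² + (L_f/2)‖x - x̃‖²` where `F = f + Σᵢ gᵢ`,
`x⁺ = x + γ(x̂ - x)`, `x̂` differs from `x` only in the updated block `i0`, the delayed
point `x̃` agrees with `x` in block `i0`, and `x̂` satisfies the best-response optimality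
with constant `c` relative to `x̃`. -/
theorem one_step_descent {N : ℕ} {n : Fin N → ℕ}
    (X : Set (PiLp 2 fun i : Fin N => EuclideanSpace ℝ (Fin (n i))))
    (hXne : X.Nonempty) (hXcl : IsClosed X) (hXcv : Convex ℝ X)
    (f : (PiLp 2 fun i : Fin N => EuclideanSpace ℝ (Fin (n i))) → ℝ)
    (g : ∀ i : Fin N, EuclideanSpace ℝ (Fin (n i)) → ℝ)
    (L_f c γ : ℝ) (hLf : 0 ≤ L_f) (hc : 0 < c) (hγ0 : 0 < γ) (hγ1 : γ ≤ 1)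
    (hf : ContDiff ℝ 1 f)
    (hlip : LipschitzOnWith (Real.toNNReal L_f) (gradient f) X)
    (hg : ∀ i, ConvexOn ℝ Set.univ (g i))
    (x xt xhat : PiLp 2 fun i : Fin N => EuclideanSpace ℝ (Fin (n i)))
    (hx : x ∈ X) (hxt : xt ∈ X) (hxhat : xhat ∈ X)
    (hplus : x + γ • (xhat - x) ∈ X)
    (i0 : Fin N)
    (hxhatsame : ∀ j, j ≠ i0 → xhat j = x j)
    (hagree : xt i0 = x i0)
    (hbr : ⟪gradient f xt i0, xhat i0 - xt i0⟫ + g i0 (xhat i0) - g i0 (xt i0)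
        ≤ -c * ‖xhat i0 - xt i0‖^2) :
    f (x + γ • (xhat - x)) + ∑ i, g i ((x + γ • (xhat - x)) i)
      ≤ f x + ∑ i, g i (x i) - γ * (c - γ * L_f) * ‖xhat - x‖^2
        + (L_f / 2) * ‖x - xt‖^2 := by
  set d : PiLp 2 fun i : Fin N => EuclideanSpace ℝ (Fin (n i)) := xhat - x with hd
  set y : PiLp 2 fun i : Fin N => EuclideanSpace ℝ (Fin (n i)) := x + γ • d with hy
  have hyx : y - x = γ • d := by rw [hy]; abel
  -- block facts
  have hd0 : ∀ j, j ≠ i0 → d j = 0 := by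
    intro j hj
    have : d j = xhat j - x j := rfl
    rw [this, hxhatsame j hj, sub_self]
  have hdi0 : d i0 = xhat i0 - xt i0 := by
    have : d i0 = xhat i0 - x i0 := rfl
    rw [this, hagree]
  -- inner decomposition
  have hinner : ⟪gradient f x, d⟫ = ⟪gradient f x i0, d i0⟫ := by
    rw [PiLp.inner_apply]
    rw [Finset.sum_eq_single i0]
    · intro j _ hj; rw [hd0 j hj, inner_zero_right]
    · intro h; exact absurd (Finset.mem_univ i0) h
  have hnormsq : ∀ u : PiLp 2 fun i : Fin N => EuclideanSpace ℝ (Fin (n i)),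
      ‖u‖^2 = ∑ i, ‖u i‖^2 := by
    intro u
    rw [← real_inner_self_eq_norm_sq, PiLp.inner_apply]
    exact Finset.sum_congr rfl fun i _ => real_inner_self_eq_norm_sq _
  have hnd : ‖d‖^2 = ‖d i0‖^2 := by
    rw [hnormsq d, Finset.sum_eq_single i0]
    · intro j _ hj; rw [hd0 j hj, norm_zero]; ring
    · intro h; exact absurd (Finset.mem_univ i0) h
  have hblock : ∀ u : PiLp 2 fun i : Fin N => EuclideanSpace ℝ (Fin (n i)),
      ‖u i0‖ ≤ ‖u‖ := by
    intro u
    have h1 : ‖u i0‖^2 ≤ ‖u‖^2 := by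
      rw [hnormsq u]
      exact Finset.single_le_sum (f := fun i => ‖u i‖^2) (fun i _ => sq_nonneg _)
        (Finset.mem_univ i0)
    nlinarith [norm_nonneg u, norm_nonneg (u i0)]
  -- descent
  have hdesc : f y ≤ f x + ⟪gradient f x, y - x⟫ + L_f / 2 * ‖y - x‖ ^ 2 :=
    descent_lemma hf hXcv hLf hlip hx hplus
  rw [hyx] at hdesc
  have hsm : ⟪gradient f x, γ • d⟫ = γ * ⟪gradient f x i0, d i0⟫ := by
    rw [real_inner_smul_right, hinner]
  have hns : ‖γ • d‖^2 = γ^2 * ‖d‖^2 := by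
    rw [norm_smul, Real.norm_eq_abs, abs_of_pos hγ0, mul_pow]
  rw [hsm, hns] at hdesc
  -- cross term
  have hgl : ‖gradient f x - gradient f xt‖ ≤ L_f * ‖x - xt‖ := by
    have h3 := hlip.dist_le_mul _ hx _ hxt
    rw [dist_eq_norm, dist_eq_norm, Real.coe_toNNReal L_f hLf] at h3
    exact h3
  have hcross : ⟪gradient f x i0, d i0⟫
      ≤ ⟪gradient f xt i0, d i0⟫ + L_f * ‖x - xt‖ * ‖d‖ := by
    have h1 : ⟪gradient f x i0 - gradient f xt i0, d i0⟫
        ≤ ‖gradient f x i0 - gradient f xt i0‖ * ‖d i0‖ := real_inner_le_norm _ _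
    have h2 : ‖gradient f x i0 - gradient f xt i0‖ ≤ ‖gradient f x - gradient f xt‖ := by
      have := hblock (gradient f x - gradient f xt)
      have he : (gradient f x - gradient f xt) i0 = gradient f x i0 - gradient f xt i0 := rfl
      rwa [he] at this
    have h4 : ‖d i0‖ ≤ ‖d‖ := hblock d
    have h5 : ⟪gradient f x i0, d i0⟫
        = ⟪gradient f xt i0, d i0⟫ + ⟪gradient f x i0 - gradient f xt i0, d i0⟫ := by
      rw [inner_sub_left]; ring
    have h6 : ‖gradient f x i0 - gradient f xt i0‖ * ‖d i0‖ ≤ L_f * ‖x - xt‖ * ‖d‖ := by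
      calc ‖gradient f x i0 - gradient f xt i0‖ * ‖d i0‖
          ≤ ‖gradient f x - gradient f xt‖ * ‖d‖ :=
            mul_le_mul h2 h4 (norm_nonneg _) (norm_nonneg _)
        _ ≤ L_f * ‖x - xt‖ * ‖d‖ :=
            mul_le_mul_of_nonneg_right hgl (norm_nonneg _)
    linarith
  -- g part
  have hyj : ∀ j, j ≠ i0 → y j = x j := by
    intro j hj
    have : y j = x j + γ • d j := rfl
    rw [this, hd0 j hj, smul_zero, add_zero]
  have hgc : g i0 (y i0) ≤ (1 - γ) * g i0 (x i0) + γ * g i0 (xhat i0) := by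
    have he : y i0 = (1 - γ) • x i0 + γ • xhat i0 := by
      have h1 : y i0 = x i0 + γ • (xhat i0 - x i0) := by
        have : y i0 = x i0 + γ • d i0 := rfl
        rw [this]; rfl
      rw [h1]; module
    rw [he]
    exact (hg i0).2 (Set.mem_univ _) (Set.mem_univ _) (by linarith) hγ0.le (by ring)
  have hsum_eq : ∑ i, g i (y i) - ∑ i, g i (x i) = g i0 (y i0) - g i0 (x i0) := by
    rw [← Finset.sum_sub_distrib, Finset.sum_eq_single i0]
    · intro j _ hj; rw [hyj j hj]; ring
    · intro h; exact absurd (Finset.mem_univ i0) h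
  -- best response in terms of d
  rw [← hdi0] at hbr
  rw [hagree] at hbr
  rw [← hnd] at hbr
  -- assemble
  have hyoung : γ * (L_f * ‖x - xt‖ * ‖d‖) ≤ L_f / 2 * ‖x - xt‖^2 + L_f / 2 * γ^2 * ‖d‖^2 := by
    nlinarith [mul_nonneg hLf (sq_nonneg (‖x - xt‖ - γ * ‖d‖))]
  have hbr' : ⟪gradient f xt i0, d i0⟫ + g i0 (xhat i0) - g i0 (x i0) ≤ -c * ‖d‖^2 := hbr
  show f y + ∑ i, g i (y i) ≤ f x + ∑ i, g i (x i) - γ * (c - γ * L_f) * ‖d‖^2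
      + L_f / 2 * ‖x - xt‖^2
  nlinarith [hdesc, hcross, hgc, hsum_eq, hbr', hyoung, hγ0, sq_nonneg ‖d‖]
end
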